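/- Let ℓ be a twisted line on X = V(F) ⊂ 𝔸^3 (with F as in the twisted-line setting) parametrized as (a_0 + w_1 t + … + w_e t^e, a_1 + t v_1, a_2 + t v_2) with v_1, v_2 coprime integers and w_e ∈ ℤ. Then the number of points of ℓ with coordinates (y,x_1,x_2) ∈ ℤ^3 satisfying |y| ≤ B^e, |x_1| ≤ B, |x_2| ≤ B is at most 2eB / max{|w_e|^{1/e}, |v_1|, |v_2|} + e. -/

import Mathlib

open MvPolynomial

lemma int_Icc_card_le (a b : ℝ) (h : a ≤ b) :
    ((Finset.Icc ⌈a⌉ ⌊b⌋).card : ℝ) ≤ b - a + 1 := by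
  rcases le_or_gt ⌈a⌉ ⌊b⌋ with hle | hlt
  · rw [Int.card_Icc]
    have h1 : (a : ℝ) ≤ (⌈a⌉ : ℝ) := Int.le_ceil a
    have h2 : ((⌊b⌋ : ℤ) : ℝ) ≤ b := Int.floor_le b
    have h3 : ((⌊b⌋ + 1 - ⌈a⌉).toNat : ℤ) = ⌊b⌋ + 1 - ⌈a⌉ := Int.toNat_of_nonneg (by omega)
    have h4 : (((⌊b⌋ + 1 - ⌈a⌉).toNat : ℕ) : ℝ) = (⌊b⌋ : ℝ) + 1 - (⌈a⌉ : ℝ) := by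
      exact_mod_cast congrArg (Int.cast : ℤ → ℝ) h3
    rw [h4]; linarith
  · rw [Finset.Icc_eq_empty (by omega)]
    simp; linarith

lemma exists_mem_pow_le_prod (m : Multiset ℝ) (h0 : m ≠ 0) (hnn : ∀ x ∈ m, 0 ≤ x) :
    ∃ a ∈ m, a ^ Multiset.card m ≤ m.prod := by
  induction m using Multiset.induction with
  | empty => simp at h0
  | cons b s ih =>
    by_cases hs : s = 0
    · subst hs
      exact ⟨b, Multiset.mem_cons_self _ _, by simp⟩
    · obtain ⟨a, ha, hle⟩ := ih hs (fun x hx => hnn x (Multiset.mem_cons_of_mem hx))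
      have hb0 : 0 ≤ b := hnn b (Multiset.mem_cons_self _ _)
      have ha0 : 0 ≤ a := hnn a (Multiset.mem_cons_of_mem ha)
      rcases le_total a b with hab | hab
      · refine ⟨a, Multiset.mem_cons_of_mem ha, ?_⟩
        rw [Multiset.card_cons, Multiset.prod_cons, pow_succ']
        exact mul_le_mul hab hle (pow_nonneg ha0 _) hb0
      · refine ⟨b, Multiset.mem_cons_self _ _, ?_⟩
        rw [Multiset.card_cons, Multiset.prod_cons, pow_succ']
        exact mul_le_mul_of_nonneg_left (le_trans (pow_le_pow_left₀ hb0 hab _) hle) hb0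

lemma exists_root_close (P : Polynomial ℂ) (hd : P.natDegree ≠ 0) (x : ℂ) (r : ℝ) (hr : 0 ≤ r)
    (h : ‖P.eval x‖ ≤ ‖P.leadingCoeff‖ * r ^ P.natDegree) :
    ∃ z ∈ P.roots, ‖x - z‖ ≤ r := by
  have hP : P ≠ 0 := fun h0 => hd (by simp [h0])
  have hsplit : P.Splits := IsAlgClosed.splits P
  have hfact := hsplit.eq_prod_roots
  have hcard : P.roots.card = P.natDegree :=
    (Polynomial.splits_iff_card_roots.mp hsplit)
  have heval : P.eval x = P.leadingCoeff * ((P.roots.map (fun z => x - z)).prod) := by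
    conv_lhs => rw [hfact]
    rw [Polynomial.eval_mul, Polynomial.eval_C, Polynomial.eval_multiset_prod,
      Multiset.map_map]
    simp [Function.comp]
  have habs : ‖P.eval x‖
      = ‖P.leadingCoeff‖ * ((P.roots.map (fun z => ‖x - z‖)).prod) := by
    rw [heval, norm_mul, show ‖(P.roots.map (fun z => x - z)).prod‖
      = (normHom : ℂ →*₀ ℝ) (P.roots.map (fun z => x - z)).prod from rfl,
      map_multiset_prod, Multiset.map_map]
    rfl
  set m : Multiset ℝ := P.roots.map (fun z => ‖x - z‖) with hm
  have hm0 : m ≠ 0 := by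
    simp only [hm, Ne, Multiset.map_eq_zero]
    intro h0
    rw [h0] at hcard
    simp at hcard
    omega
  obtain ⟨a, ham, hale⟩ := exists_mem_pow_le_prod m hm0 (by
    intro y hy
    obtain ⟨z, _, rfl⟩ := Multiset.mem_map.mp hy
    exact norm_nonneg _)
  obtain ⟨z, hz, hza⟩ := Multiset.mem_map.mp ham
  refine ⟨z, hz, ?_⟩
  have hcardm : Multiset.card m = P.natDegree := by rw [hm, Multiset.card_map, hcard]
  have hlead : 0 < ‖P.leadingCoeff‖ := by
    simp [Polynomial.leadingCoeff_ne_zero.mpr hP, norm_pos_iff]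
  have hprod : m.prod ≤ r ^ P.natDegree := by
    rw [habs] at h
    exact le_of_mul_le_mul_left h hlead
  subst hza
  have : ‖x - z‖ ^ P.natDegree ≤ r ^ P.natDegree := by
    calc ‖x - z‖ ^ P.natDegree = ‖x - z‖ ^ Multiset.card m := by
          rw [hcardm]
    _ ≤ m.prod := hale
    _ ≤ r ^ P.natDegree := hprod
  exact le_of_pow_le_pow_left₀ hd hr this

lemma linear_count (v c : ℤ) (hv : v ≠ 0) (B : ℝ) (hB : 0 ≤ B) :
    ∃ T : Finset ℤ, (∀ s : ℤ, |((c : ℝ) + (s : ℝ) * (v : ℝ))| ≤ B → s ∈ T) ∧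
      ((T.card : ℝ) ≤ 2 * B / |(v : ℝ)| + 1) := by
  rcases hv.lt_or_gt with hneg | hpos
  · have hvR : ((v : ℝ)) < 0 := by exact_mod_cast hneg
    refine ⟨Finset.Icc ⌈(B - c) / (v : ℝ)⌉ ⌊(-B - c) / (v : ℝ)⌋, ?_, ?_⟩
    · intro s hs
      rw [abs_le] at hs
      rw [Finset.mem_Icc, Int.ceil_le, Int.le_floor]
      constructor
      · rw [div_le_iff_of_neg hvR]; linarith [hs.2]
      · rw [le_div_iff_of_neg hvR]; linarith [hs.1]
    · have key : (-B - c) / (v : ℝ) - (B - c) / (v : ℝ) = 2 * B / |(v : ℝ)| := by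
        rw [abs_of_neg hvR, div_sub_div_same]
        field_simp [hvR.ne]
        ring
      have := int_Icc_card_le ((B - c) / (v : ℝ)) ((-B - c) / (v : ℝ))
        (by rw [← sub_nonneg, key]; positivity)
      linarith
  · have hvR : (0 : ℝ) < (v : ℝ) := by exact_mod_cast hpos
    refine ⟨Finset.Icc ⌈(-B - c) / (v : ℝ)⌉ ⌊(B - c) / (v : ℝ)⌋, ?_, ?_⟩
    · intro s hs
      rw [abs_le] at hs
      rw [Finset.mem_Icc, Int.ceil_le, Int.le_floor]
      constructor
      · rw [div_le_iff₀ hvR]; linarith [hs.1]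
      · rw [le_div_iff₀ hvR]; linarith [hs.2]
    · have key : (B - c) / (v : ℝ) - (-B - c) / (v : ℝ) = 2 * B / |(v : ℝ)| := by
        rw [abs_of_pos hvR, div_sub_div_same]
        field_simp [hvR.ne']
        ring
      have := int_Icc_card_le ((-B - c) / (v : ℝ)) ((B - c) / (v : ℝ))
        (by rw [← sub_nonneg, key]; positivity)
      linarith

theorem stmt_10 (d e : ℕ) (hd : 2 ≤ d) (he : 1 ≤ e)
    (Ftop F0 F : MvPolynomial (Fin 3) ℤ)
    (hhom : ∀ m ∈ Ftop.support, e * m 0 + m 1 + m 2 = d * e)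
    (hmonic : Ftop.coeff (Finsupp.single 0 d) = 1)
    (habs : Irreducible (MvPolynomial.map (Int.castRingHom (AlgebraicClosure ℚ)) Ftop))
    (hF0 : ∀ m ∈ F0.support, e * m 0 + m 1 + m 2 < d * e)
    (hF : F = Ftop + F0)
    (a0 a1 a2 : ℚ) (v1 v2 we : ℤ) (w : Fin e → ℚ)
    (hcop : Int.gcd v1 v2 = 1) (hwe : w ⟨e - 1, by omega⟩ = (we : ℚ))
    (ℓ : Set (ℚ × ℚ × ℚ))
    (hℓ : ℓ = {p : ℚ × ℚ × ℚ | ∃ t : ℚ,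
      p = (a0 + ∑ i : Fin e, w i * t ^ ((i : ℕ) + 1), a1 + t * (v1 : ℚ), a2 + t * (v2 : ℚ))})
    (hsub : ∀ p ∈ ℓ, MvPolynomial.aeval ![p.1, p.2.1, p.2.2] F = (0 : ℚ))
    (B : ℝ) (hB : 1 ≤ B) :
    (Nat.card {q : ℤ × ℤ × ℤ // ((q.1 : ℚ), (q.2.1 : ℚ), (q.2.2 : ℚ)) ∈ ℓ ∧
        |(q.1 : ℝ)| ≤ B ^ e ∧ |(q.2.1 : ℝ)| ≤ B ∧ |(q.2.2 : ℝ)| ≤ B} : ℝ)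
      ≤ 2 * e * B / max (|(we : ℝ)| ^ ((1 : ℝ) / e)) (max |(v1 : ℝ)| |(v2 : ℝ)|) + e := by
  subst hℓ
  set W : ℝ := |(we : ℝ)| ^ ((1 : ℝ) / e) with hWdef
  set V : ℝ := max |(v1 : ℝ)| |(v2 : ℝ)| with hVdef
  have hB0 : (0 : ℝ) < B := by linarith
  have hv12 : v1 ≠ 0 ∨ v2 ≠ 0 := by
    by_contra hcon
    push_neg at hcon
    rw [hcon.1, hcon.2] at hcop
    simp [Int.gcd] at hcop
  have hV1 : (1 : ℝ) ≤ V := by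
    rcases hv12 with h | h
    · refine le_trans ?_ (le_max_left _ _)
      have := Int.one_le_abs h
      calc (1:ℝ) = ((1:ℤ):ℝ) := by norm_num
      _ ≤ ((|v1| : ℤ) : ℝ) := by exact_mod_cast this
      _ = |(v1 : ℝ)| := by push_cast; ring
    · refine le_trans ?_ (le_max_right _ _)
      have := Int.one_le_abs h
      calc (1:ℝ) = ((1:ℤ):ℝ) := by norm_num
      _ ≤ ((|v2| : ℤ) : ℝ) := by exact_mod_cast this
      _ = |(v2 : ℝ)| := by push_cast; ring
  have hM1 : (1 : ℝ) ≤ max W V := le_trans hV1 (le_max_right _ _)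
  have hM0 : (0 : ℝ) < max W V := by linarith
  have he1 : (1 : ℝ) ≤ (e : ℝ) := by exact_mod_cast he
  set S := {q : ℤ × ℤ × ℤ // ((q.1 : ℚ), (q.2.1 : ℚ), (q.2.2 : ℚ)) ∈
      {p : ℚ × ℚ × ℚ | ∃ t : ℚ,
        p = (a0 + ∑ i : Fin e, w i * t ^ ((i : ℕ) + 1), a1 + t * (v1 : ℚ), a2 + t * (v2 : ℚ))} ∧
      |(q.1 : ℝ)| ≤ B ^ e ∧ |(q.2.1 : ℝ)| ≤ B ∧ |(q.2.2 : ℝ)| ≤ B} with hSdef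
  rcases isEmpty_or_nonempty S with hE | hNE
  · rw [Nat.card_of_isEmpty]
    have h1 : (0:ℝ) ≤ 2 * e * B / max W V := by positivity
    have h2 : (0:ℝ) ≤ (e:ℝ) := by positivity
    push_cast
    linarith
  · -- Nonempty case
    obtain ⟨q0⟩ := hNE
    obtain ⟨t0, ht0⟩ := q0.prop.1
    simp only [Prod.mk.injEq] at ht0
    obtain ⟨h0y, h0x1, h0x2⟩ := ht0
    have hbez : (1 : ℤ) = v1 * Int.gcdA v1 v2 + v2 * Int.gcdB v1 v2 := by
      have h := Int.gcd_eq_gcd_ab v1 v2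
      rw [hcop] at h
      exact_mod_cast h
    set s : S → ℤ := fun q =>
      (q.val.2.1 - q0.val.2.1) * Int.gcdA v1 v2 + (q.val.2.2 - q0.val.2.2) * Int.gcdB v1 v2
      with hsdef
    have key : ∀ q : S,
        ((q.val.1 : ℚ) = a0 + ∑ i : Fin e, w i * ((t0 + (s q : ℚ))) ^ ((i : ℕ) + 1)) ∧
        ((q.val.2.1 : ℚ) = a1 + (t0 + (s q : ℚ)) * v1) ∧
        ((q.val.2.2 : ℚ) = a2 + (t0 + (s q : ℚ)) * v2) := by
      intro q
      obtain ⟨t, ht⟩ := q.prop.1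
      simp only [Prod.mk.injEq] at ht
      obtain ⟨hy, hx1, hx2⟩ := ht
      have hd1 : (t - t0) * v1 = (q.val.2.1 : ℚ) - q0.val.2.1 := by
        rw [hx1, h0x1]; ring
      have hd2 : (t - t0) * v2 = (q.val.2.2 : ℚ) - q0.val.2.2 := by
        rw [hx2, h0x2]; ring
      have hb : ((1 : ℤ) : ℚ) = ((v1 * Int.gcdA v1 v2 + v2 * Int.gcdB v1 v2 : ℤ) : ℚ) := by
        exact_mod_cast congrArg (Int.cast : ℤ → ℚ) hbez
      have hs1 : (s q : ℚ)
          = ((q.val.2.1 : ℚ) - q0.val.2.1) * (Int.gcdA v1 v2 : ℚ)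
            + ((q.val.2.2 : ℚ) - q0.val.2.2) * (Int.gcdB v1 v2 : ℚ) := by
        rw [hsdef]; push_cast; ring
      rw [← hd1, ← hd2] at hs1
      have hs2 : (s q : ℚ) = (t - t0) * (((v1 * Int.gcdA v1 v2 + v2 * Int.gcdB v1 v2 : ℤ) : ℚ)) := by
        rw [hs1]; push_cast; ring
      rw [← hb] at hs2
      have hts : t = t0 + (s q : ℚ) := by
        push_cast at hs2
        linarith
      rw [← hts]
      exact ⟨hy, hx1, hx2⟩
    have hinj : ∀ q q' : S, s q = s q' → q = q' := by
      intro q q' hss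
      obtain ⟨hy, hx1, hx2⟩ := key q
      obtain ⟨hy', hx1', hx2'⟩ := key q'
      rw [hss] at hy hx1 hx2
      have e1 : q.val.1 = q'.val.1 := by exact_mod_cast hy.trans hy'.symm
      have e2 : q.val.2.1 = q'.val.2.1 := by exact_mod_cast hx1.trans hx1'.symm
      have e3 : q.val.2.2 = q'.val.2.2 := by exact_mod_cast hx2.trans hx2'.symm
      apply Subtype.ext
      exact Prod.ext e1 (Prod.ext e2 e3)
    have hcount : ∀ (T : Finset ℤ), (∀ q : S, s q ∈ T) → (Nat.card S : ℝ) ≤ (T.card : ℝ) := by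
      intro T hT
      have hf : Function.Injective (fun q : S => (⟨s q, hT q⟩ : {x // x ∈ T})) := by
        intro q q' h
        exact hinj q q' (congrArg Subtype.val h)
      have hle := Nat.card_le_card_of_injective _ hf
      have hTc : Nat.card {x // x ∈ T} = T.card := Nat.card_eq_finsetCard T
      rw [hTc] at hle
      exact_mod_cast hle
    rcases le_total W V with hWV | hVW
    · -- linear case
      have hVeq : W ⊔ V = V := max_eq_right hWV
      rcases le_total |(v1 : ℝ)| |(v2 : ℝ)| with h12 | h21
      · have hVv : V = |(v2 : ℝ)| := max_eq_right h12
        have hv2 : v2 ≠ 0 := by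
          intro h0
          rw [h0] at hVv
          simp at hVv
          rw [hVv] at hV1
          linarith
        obtain ⟨T, hTmem, hTcard⟩ := linear_count v2 q0.val.2.2 hv2 B (le_of_lt hB0)
        have hmem : ∀ q : S, s q ∈ T := by
          intro q
          apply hTmem
          obtain ⟨-, -, hx2⟩ := key q
          have hq2 : (q.val.2.2 : ℚ) = (q0.val.2.2 : ℚ) + (s q : ℚ) * v2 := by
            rw [hx2, h0x2]; ring
          have hR : ((q.val.2.2 : ℤ) : ℝ) = ((q0.val.2.2 : ℤ) : ℝ) + (s q : ℝ) * (v2 : ℝ) := by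
            exact_mod_cast hq2
          rw [← hR]
          exact q.prop.2.2.2
        calc (Nat.card S : ℝ) ≤ (T.card : ℝ) := hcount T hmem
          _ ≤ 2 * B / |(v2 : ℝ)| + 1 := hTcard
          _ ≤ 2 * e * B / (W ⊔ V) + e := by
              rw [hVeq, hVv]
              have hx : (0:ℝ) ≤ 2 * B / |(v2 : ℝ)| := div_nonneg (by linarith) (abs_nonneg _)
              have hring : 2 * (e:ℝ) * B / |(v2:ℝ)| = (e:ℝ) * (2 * B / |(v2:ℝ)|) := by ring
              nlinarith
      · have hVv : V = |(v1 : ℝ)| := max_eq_left h21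
        have hv1 : v1 ≠ 0 := by
          intro h0
          rw [h0] at hVv
          simp at hVv
          rw [hVv] at hV1
          linarith
        obtain ⟨T, hTmem, hTcard⟩ := linear_count v1 q0.val.2.1 hv1 B (le_of_lt hB0)
        have hmem : ∀ q : S, s q ∈ T := by
          intro q
          apply hTmem
          obtain ⟨-, hx1, -⟩ := key q
          have hq2 : (q.val.2.1 : ℚ) = (q0.val.2.1 : ℚ) + (s q : ℚ) * v1 := by
            rw [hx1, h0x1]; ring
          have hR : ((q.val.2.1 : ℤ) : ℝ) = ((q0.val.2.1 : ℤ) : ℝ) + (s q : ℝ) * (v1 : ℝ) := by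
            exact_mod_cast hq2
          rw [← hR]
          exact q.prop.2.2.1
        calc (Nat.card S : ℝ) ≤ (T.card : ℝ) := hcount T hmem
          _ ≤ 2 * B / |(v1 : ℝ)| + 1 := hTcard
          _ ≤ 2 * e * B / (W ⊔ V) + e := by
              rw [hVeq, hVv]
              have hx : (0:ℝ) ≤ 2 * B / |(v1 : ℝ)| := div_nonneg (by linarith) (abs_nonneg _)
              have hring : 2 * (e:ℝ) * B / |(v1:ℝ)| = (e:ℝ) * (2 * B / |(v1:ℝ)|) := by ring
              nlinarith
    · -- polynomial case
      have hVeq : W ⊔ V = W := max_eq_left hVW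
      have hW1 : (1:ℝ) ≤ W := le_trans hV1 hVW
      have hW0 : (0:ℝ) < W := by linarith
      have hwe0 : we ≠ 0 := by
        intro h0
        have hWz : W = 0 := by
          rw [hWdef, h0]
          simp only [Int.cast_zero, abs_zero]
          exact Real.zero_rpow (by positivity)
        linarith
      have hWpow : W ^ e = |(we : ℝ)| := by
        rw [hWdef, ← Real.rpow_natCast (|(we:ℝ)| ^ ((1:ℝ)/e)) e, ← Real.rpow_mul (abs_nonneg _)]
        have h1e : (1:ℝ)/e * e = 1 := by
          field_simp
        rw [h1e, Real.rpow_one]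
      set P : Polynomial ℚ :=
        Polynomial.C a0 + ∑ i : Fin e, Polynomial.C (w i) * Polynomial.X ^ ((i:ℕ)+1) with hPdef
      have hcoeff : P.coeff e = (we : ℚ) := by
        rw [hPdef, Polynomial.coeff_add, Polynomial.coeff_C, if_neg (by omega),
          Polynomial.finset_sum_coeff]
        have hterm : ∀ i : Fin e, (Polynomial.C (w i) * Polynomial.X ^ ((i:ℕ)+1)).coeff e
            = if i = (⟨e-1, by omega⟩ : Fin e) then (we:ℚ) else 0 := by
          intro i
          rw [Polynomial.coeff_C_mul, Polynomial.coeff_X_pow]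
          by_cases hi : i = (⟨e-1, by omega⟩ : Fin e)
          · have hival : (i:ℕ) = e - 1 := by rw [hi]
            rw [if_pos (by omega), if_pos hi, mul_one, hi]
            exact hwe
          · have hne : e ≠ (i:ℕ)+1 := by
              intro hcon
              apply hi
              apply Fin.ext
              simp only []
              omega
            rw [if_neg hne, if_neg hi, mul_zero]
        rw [Finset.sum_congr rfl (fun i _ => hterm i), Finset.sum_ite_eq' Finset.univ]
        simp
      have hdegle : P.natDegree ≤ e := by
        rw [hPdef]
        refine le_trans (Polynomial.natDegree_add_le _ _) (max_le (by simp) ?_)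
        apply Polynomial.natDegree_sum_le_of_forall_le
        intro i _
        refine le_trans (Polynomial.natDegree_C_mul_le _ _) ?_
        rw [Polynomial.natDegree_X_pow]
        omega
      have hwene : (we : ℚ) ≠ 0 := Int.cast_ne_zero.mpr hwe0
      have hdeg : P.natDegree = e := by
        refine le_antisymm hdegle (Polynomial.le_natDegree_of_ne_zero ?_)
        rw [hcoeff]
        exact hwene
      have hlead : P.leadingCoeff = (we : ℚ) := by
        rw [Polynomial.leadingCoeff, hdeg, hcoeff]
      have hPeval : ∀ t : ℚ, P.eval t = a0 + ∑ i : Fin e, w i * t ^ ((i:ℕ)+1) := by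
        intro t
        rw [hPdef]
        simp [Polynomial.eval_finset_sum]
      set Pc : Polynomial ℂ := P.map (algebraMap ℚ ℂ) with hPc
      have hmapinj : Function.Injective (algebraMap ℚ ℂ) := (algebraMap ℚ ℂ).injective
      have hdegC : Pc.natDegree = e := by
        rw [hPc, Polynomial.natDegree_map_eq_of_injective hmapinj, hdeg]
      have hleadC : Pc.leadingCoeff = ((we:ℚ):ℂ) := by
        rw [hPc, Polynomial.leadingCoeff_map, hlead]
        exact eq_ratCast _ _
      have hevalC : ∀ t : ℚ, Pc.eval (t : ℂ) = ((P.eval t : ℚ) : ℂ) := by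
        intro t
        rw [hPc, ← eq_ratCast (algebraMap ℚ ℂ) t, Polynomial.eval_map,
          Polynomial.eval₂_at_apply, eq_ratCast]
      set r : ℝ := B / W with hrdef
      have hr0 : (0:ℝ) ≤ r := le_of_lt (div_pos hB0 hW0)
      have habsb : ∀ q : S, ‖Pc.eval (((t0 + (s q : ℚ) : ℚ)) : ℂ)‖
          ≤ ‖Pc.leadingCoeff‖ * r ^ Pc.natDegree := by
        intro q
        rw [hevalC]
        obtain ⟨hy, -, -⟩ := key q
        have hyq : P.eval (t0 + (s q : ℚ)) = (q.val.1 : ℚ) := by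
          rw [hPeval]; exact hy.symm
        rw [hyq]
        have h1 : ‖(((q.val.1 : ℚ)) : ℂ)‖ = |((q.val.1 : ℤ) : ℝ)| := by
          have hcc : (((q.val.1 : ℚ)) : ℂ) = (((q.val.1 : ℝ)) : ℂ) := by push_cast; ring
          rw [hcc, Complex.norm_real, Real.norm_eq_abs]
        rw [h1, hleadC, hdegC]
        have h2 : ‖(((we : ℚ)) : ℂ)‖ = |(we:ℝ)| := by
          have hcc : (((we : ℚ)) : ℂ) = (((we : ℝ)) : ℂ) := by push_cast; ring
          rw [hcc, Complex.norm_real, Real.norm_eq_abs]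
        rw [h2]
        have h3 : |(we:ℝ)| * r ^ e = B ^ e := by
          rw [hrdef, div_pow, ← hWpow]
          field_simp
        rw [h3]
        exact q.prop.2.1
      set 𝒯 : Finset ℤ := Pc.roots.toFinset.biUnion
          (fun z => Finset.Icc ⌈z.re - (t0:ℝ) - r⌉ ⌊z.re - (t0:ℝ) + r⌋) with h𝒯
      have hmem : ∀ q : S, s q ∈ 𝒯 := by
        intro q
        obtain ⟨z, hz, hzr⟩ := exists_root_close Pc (by rw [hdegC]; omega)
          (((t0 + (s q : ℚ) : ℚ)) : ℂ) r hr0 (habsb q)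
        rw [h𝒯, Finset.mem_biUnion]
        refine ⟨z, Multiset.mem_toFinset.mpr hz, ?_⟩
        have hre : |((t0:ℝ) + (s q : ℝ)) - z.re| ≤ r := by
          have h4 := Complex.abs_re_le_norm ((((t0 + (s q : ℚ) : ℚ)) : ℂ) - z)
          have h5 : ((((t0 + (s q : ℚ) : ℚ)) : ℂ) - z).re = ((t0:ℝ) + (s q:ℝ)) - z.re := by
            simp [Complex.sub_re]
            try push_cast
            try ring
          rw [h5] at h4
          exact le_trans h4 hzr
        rw [Finset.mem_Icc, Int.ceil_le, Int.le_floor]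
        rw [abs_le] at hre
        exact ⟨by linarith [hre.2], by linarith [hre.1]⟩
      have hcard : (𝒯.card : ℝ) ≤ e * (2*r + 1) := by
        have hb := Finset.card_biUnion_le (s := Pc.roots.toFinset)
          (t := fun z => Finset.Icc ⌈z.re - (t0:ℝ) - r⌉ ⌊z.re - (t0:ℝ) + r⌋)
        have hsum : ((∑ z ∈ Pc.roots.toFinset,
            (Finset.Icc ⌈z.re - (t0:ℝ) - r⌉ ⌊z.re - (t0:ℝ) + r⌋).card : ℕ) : ℝ)
            ≤ (Pc.roots.toFinset.card : ℝ) * (2*r+1) := by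
          push_cast
          calc ∑ z ∈ Pc.roots.toFinset,
                ((Finset.Icc ⌈z.re - (t0:ℝ) - r⌉ ⌊z.re - (t0:ℝ) + r⌋).card : ℝ)
              ≤ ∑ _z ∈ Pc.roots.toFinset, (2*r+1) := by
                 refine Finset.sum_le_sum (fun z _ => ?_)
                 calc ((Finset.Icc ⌈z.re - (t0:ℝ) - r⌉ ⌊z.re - (t0:ℝ) + r⌋).card : ℝ)
                     ≤ (z.re - (t0:ℝ) + r) - (z.re - (t0:ℝ) - r) + 1 :=
                       int_Icc_card_le _ _ (by linarith)
                   _ = 2*r + 1 := by ring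
            _ = (Pc.roots.toFinset.card : ℝ) * (2*r+1) := by
                 rw [Finset.sum_const, nsmul_eq_mul]
        have htf : (Pc.roots.toFinset.card : ℝ) ≤ (e:ℝ) := by
          have h6 := Multiset.toFinset_card_le Pc.roots
          have h7 := Polynomial.card_roots' Pc
          rw [hdegC] at h7
          exact_mod_cast le_trans h6 h7
        calc (𝒯.card : ℝ)
            ≤ ((∑ z ∈ Pc.roots.toFinset,
              (Finset.Icc ⌈z.re - (t0:ℝ) - r⌉ ⌊z.re - (t0:ℝ) + r⌋).card : ℕ) : ℝ) := by
              exact_mod_cast hb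
          _ ≤ (Pc.roots.toFinset.card : ℝ) * (2*r+1) := hsum
          _ ≤ (e:ℝ) * (2*r+1) := mul_le_mul_of_nonneg_right htf (by linarith)
      calc (Nat.card S : ℝ) ≤ (𝒯.card : ℝ) := hcount 𝒯 hmem
        _ ≤ (e:ℝ) * (2*r + 1) := hcard
        _ = 2 * e * B / (W ⊔ V) + e := by
            rw [hVeq, hrdef]
            field_simp
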